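/- Let α < β be real numbers and Δ_α, Δ_β, Δ_{α.β} ∈ ℝ with P(α−β) = Δ_α + Δ_β, where P(x) = (x²+3x+2)/2, 3+α−β > 0, and α.β = (α+β)/2 + (Δ_β−Δ_α)/(3+α−β). If 2Δ_β < 1, then the inequality (α + α.β)/2 + (Δ_{α.β} − Δ_α)/(α − α.β) < (α+β)/2 + (Δ_β − Δ_α)/(α − β) holds, where Δ_{α.β} = (1 − 1/r_{α.β}²)/2 with r_{α.β} = r_α r_β(3+α−β), Δ_α = (1−1/r_α²)/2, Δ_β = (1−1/r_β²)/2 for positive reals r_α, r_β. -/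

import Mathlib

/-- With positive reals r_α, r_β, reals α < β with 3+α-β > 0,
Δ_α = (1-1/r_α²)/2, Δ_β = (1-1/r_β²)/2, P(x) = (x²+3x+2)/2,
P(α-β) = Δ_α + Δ_β, α.β = (α+β)/2 + (Δ_β-Δ_α)/(3+α-β),
r_{α.β} = r_α r_β(3+α-β), Δ_{α.β} = (1-1/r_{α.β}²)/2:
if 2Δ_β < 1 then
(α + α.β)/2 + (Δ_{α.β} - Δ_α)/(α - α.β) < (α+β)/2 + (Δ_β - Δ_α)/(α - β). -/
theorem stmt18 (α β rα rβ : ℝ) (hrα : 0 < rα) (hrβ : 0 < rβ)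
    (hαβ : α < β) (hpos : 0 < 3 + α - β)
    (P : ℝ → ℝ) (hP : ∀ x, P x = (x ^ 2 + 3 * x + 2) / 2)
    (Δα Δβ : ℝ) (hΔα : Δα = (1 - 1 / rα ^ 2) / 2) (hΔβ : Δβ = (1 - 1 / rβ ^ 2) / 2)
    (hrel : P (α - β) = Δα + Δβ)
    (γ : ℝ) (hγ : γ = (α + β) / 2 + (Δβ - Δα) / (3 + α - β))
    (rγ : ℝ) (hrγ : rγ = rα * rβ * (3 + α - β))
    (Δγ : ℝ) (hΔγ : Δγ = (1 - 1 / rγ ^ 2) / 2)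
    (h2 : 2 * Δβ < 1) :
    (α + γ) / 2 + (Δγ - Δα) / (α - γ) < (α + β) / 2 + (Δβ - Δα) / (α - β) := by
  obtain ⟨a, ha_def⟩ : ∃ a : ℝ, a = 1 / rα ^ 2 := ⟨_, rfl⟩
  obtain ⟨b, hb_def⟩ : ∃ b : ℝ, b = 1 / rβ ^ 2 := ⟨_, rfl⟩
  obtain ⟨s, hs_def⟩ : ∃ s : ℝ, s = 3 + α - β := ⟨_, rfl⟩
  have ha : 0 < a := by rw [ha_def]; positivity
  have hb : 0 < b := by rw [hb_def]; positivity
  have hs : 0 < s := by rw [hs_def]; linarith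
  have hβ : β = α + (3 - s) := by rw [hs_def]; ring
  have hs3 : s < 3 := by nlinarith [hβ]
  rw [← ha_def] at hΔα
  rw [← hb_def] at hΔβ
  -- express Δγ in terms of a, b, s
  have hΔγ' : Δγ = (1 - a * b / s ^ 2) / 2 := by
    rw [hΔγ, hrγ, ← hs_def, ha_def, hb_def]
    field_simp
  subst hβ
  -- key relation
  rw [hP, hΔα, hΔβ] at hrel
  have hab : s * (3 - s) = a + b := by linear_combination (-2 : ℝ) * hrel
  -- γ - α = a / s
  have hγα : γ - α = a / s := by
    rw [hγ, hΔα, hΔβ]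
    have : (3 : ℝ) + α - (α + (3 - s)) = s := by ring
    rw [this]
    field_simp
    linear_combination hab
  have hγα' : α - γ = -(a / s) := by linarith
  have hγeq : γ = α + a / s := by linarith
  have hL : (α + γ) / 2 + (Δγ - Δα) / (α - γ) = α + (3 - 2 * s) / 2 := by
    rw [hγα', hΔγ', hΔα, hγeq]
    field_simp
    linear_combination (-a) * hab
  have hR : (α + (α + (3 - s))) / 2 + (Δβ - Δα) / (α - (α + (3 - s)))
      = α + (3 - s) / 2 - (a - b) / (2 * (3 - s)) := by
    rw [hΔα, hΔβ]
    have h3s : (0:ℝ) < 3 - s := by linarith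
    have : α - (α + (3 - s)) = -(3 - s) := by ring
    rw [this]
    have hne : s - 3 ≠ 0 := by linarith
    field_simp [hne]
    ring
  rw [hL, hR]
  have h3s : (0:ℝ) < 3 - s := by linarith
  have key : (a - b) / (2 * (3 - s)) < s / 2 := by
    rw [div_lt_iff₀ (by positivity)]
    nlinarith [hab, hb]
  linarith
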